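/- Let G = (X ∪ Y, E) be X-semi-bipartite with Y finite, and suppose for every S ⊆ Y, |S| ≤ |N_G(S) ∩ X|. Then every maximum cardinality matching of G is Y-perfect. -/

import Mathlib

open SimpleGraph

lemma matching_verts_ncard {V : Type*} [Fintype V] {G : SimpleGraph V} {M : G.Subgraph}
    (hM : M.IsMatching) : M.verts.ncard = 2 * M.edgeSet.ncard := by
  classical
  have hvfin : M.verts.Finite := Set.toFinite _
  have hefin : M.edgeSet.Finite := Set.toFinite _
  rw [Set.ncard_eq_toFinset_card _ hvfin, Set.ncard_eq_toFinset_card _ hefin]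
  set s := hvfin.toFinset with hs
  set t := hefin.toFinset with ht
  set F : V → Sym2 V := fun v => if h : v ∈ M.verts then (hM.toEdge ⟨v, h⟩ : Sym2 V)
    else Sym2.diag v with hF
  have hmem : ∀ v ∈ s, F v ∈ t := by
    intro v hv
    rw [hs, Set.Finite.mem_toFinset] at hv
    simp only [hF, dif_pos hv, ht, Set.Finite.mem_toFinset]
    exact (hM.toEdge ⟨v, hv⟩).2
  rw [Finset.card_eq_sum_card_fiberwise hmem]
  have hfiber : ∀ e ∈ t, (s.filter (fun v => F v = e)).card = 2 := by
    intro e he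
    rw [ht, Set.Finite.mem_toFinset] at he
    induction e with
    | _ a b =>
      rw [Subgraph.mem_edgeSet] at he
      have hne : a ≠ b := he.ne
      have ha : a ∈ M.verts := M.edge_vert he
      have hb : b ∈ M.verts := M.edge_vert he.symm
      have hfil : s.filter (fun v => F v = s(a, b)) = {a, b} := by
        ext v
        simp only [Finset.mem_filter, hs, Set.Finite.mem_toFinset, Finset.mem_insert,
          Finset.mem_singleton]
        constructor
        · rintro ⟨hv, hFv⟩
          have : v ∈ F v := by
            simp only [hF, dif_pos hv]
            rw [Subgraph.IsMatching.toEdge]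
            exact Sym2.mem_mk_left _ _
          rw [hFv] at this
          rwa [Sym2.mem_iff] at this
        · rintro (rfl | rfl)
          · refine ⟨ha, ?_⟩
            simp only [hF, dif_pos ha]
            exact congrArg Subtype.val (hM.toEdge_eq_of_adj he)
          · refine ⟨hb, ?_⟩
            simp only [hF, dif_pos hb]
            have := congrArg Subtype.val (hM.toEdge_eq_of_adj he.symm)
            rw [this]
            exact Sym2.eq_swap
      rw [hfil, Finset.card_insert_of_notMem (by simpa using hne), Finset.card_singleton]
  rw [Finset.sum_congr rfl hfiber, Finset.sum_const, smul_eq_mul, mul_comm]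

lemma hall_fn {V : Type*} [Fintype V] (G : SimpleGraph V) (X Y : Set V)
    (hHall : ∀ S ⊆ Y, S.ncard ≤ ({w | ∃ u ∈ S, G.Adj u w} ∩ X).ncard) :
    ∃ f : Y → V, Function.Injective f ∧ ∀ y : Y, G.Adj ↑y (f y) ∧ f y ∈ X := by
  classical
  set t : Y → Finset V := fun y => (Set.toFinite {w | G.Adj ↑y w ∧ w ∈ X}).toFinset with ht
  have hcond : ∀ s : Finset Y, s.card ≤ (s.biUnion t).card := by
    intro s
    set S : Set V := Subtype.val '' (↑s : Set Y) with hS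
    have hSsub : S ⊆ Y := by rintro v ⟨y, _, rfl⟩; exact y.2
    have h1 : S.ncard = s.card := by
      rw [hS, Set.ncard_image_of_injective _ Subtype.val_injective]
      simp [Set.ncard_coe_finset]
    have h2 : ({w | ∃ u ∈ S, G.Adj u w} ∩ X) = ↑(s.biUnion t) := by
      ext w
      simp only [Set.mem_inter_iff, Set.mem_setOf_eq, Finset.coe_biUnion, Set.mem_iUnion,
        Finset.mem_coe, ht, Set.Finite.mem_toFinset, Set.mem_setOf_eq, hS]
      constructor
      · rintro ⟨⟨u, ⟨y, hy, rfl⟩, hadj⟩, hw⟩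
        exact ⟨y, hy, hadj, hw⟩
      · rintro ⟨y, hy, hadj, hw⟩
        exact ⟨⟨↑y, ⟨y, hy, rfl⟩, hadj⟩, hw⟩
    have := hHall S hSsub
    rw [h1, h2, Set.ncard_coe_finset] at this
    exact this
  obtain ⟨f, hinj, hf⟩ := (Finset.all_card_le_biUnion_card_iff_exists_injective t).mp hcond
  refine ⟨f, hinj, fun y => ?_⟩
  have := hf y
  rw [ht, Set.Finite.mem_toFinset] at this
  exact this

/-- Under Hall's condition, every maximum cardinality matching is `Y`-perfect. -/
theorem semi_bipartite_hall_maximum_matching_perfect {V : Type*} [Fintype V] (G : SimpleGraph V)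
    (X Y : Set V) (hdisj : Disjoint X Y) (hcover : X ∪ Y = Set.univ)
    (hind : ∀ a ∈ X, ∀ b ∈ X, ¬ G.Adj a b)
    (hHall : ∀ S ⊆ Y, S.ncard ≤ ({w | ∃ u ∈ S, G.Adj u w} ∩ X).ncard)
    (M : G.Subgraph) (hM : M.IsMatching)
    (hmax : ∀ M' : G.Subgraph, M'.IsMatching → M'.edgeSet.ncard ≤ M.edgeSet.ncard) :
    Y ⊆ M.verts := by
  classical
  obtain ⟨f, hfinj, hf⟩ := hall_fn G X Y hHall
  intro y0 hy0Y
  by_contra hy0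
  set f' : V → V := fun v => if h : v ∈ Y then f ⟨v, h⟩ else v with hf'
  have hf'X : ∀ v ∈ Y, f' v ∈ X := fun v hv => by
    simp only [hf', dif_pos hv]; exact (hf ⟨v, hv⟩).2
  have hf'adj : ∀ v ∈ Y, G.Adj v (f' v) := fun v hv => by
    simp only [hf', dif_pos hv]; exact (hf ⟨v, hv⟩).1
  have hf'inj : ∀ a ∈ Y, ∀ b ∈ Y, f' a = f' b → a = b := by
    intro a ha b hb hab
    simp only [hf', dif_pos ha, dif_pos hb] at hab
    exact congrArg Subtype.val (hfinj hab)
  set p : V → V := fun v => if h : v ∈ M.verts then (hM h).choose else v with hp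
  have hpadj : ∀ {v}, v ∈ M.verts → M.Adj v (p v) := by
    intro v hv; simp only [hp, dif_pos hv]; exact (hM hv).choose_spec.1
  set g : ℕ → V := fun n => (fun v => p (f' v))^[n] y0 with hg
  have hgsucc : ∀ n, g (n+1) = p (f' (g n)) := by
    intro n; simp only [hg, Function.iterate_succ_apply']
  have hg0 : g 0 = y0 := rfl
  have hY : ∀ n, (∀ k < n, f' (g k) ∈ M.verts) → g n ∈ Y := by
    intro n
    induction n with
    | zero => intro _; exact hy0Y
    | succ m ih =>
      intro h
      have hgm : g m ∈ Y := ih (fun k hk => h k (hk.trans (Nat.lt_succ_self m)))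
      have hx : f' (g m) ∈ M.verts := h m (Nat.lt_succ_self m)
      have hadj : M.Adj (f' (g m)) (g (m+1)) := hgsucc m ▸ hpadj hx
      have hGadj : G.Adj (f' (g m)) (g (m+1)) := hadj.adj_sub
      have hxX : f' (g m) ∈ X := hf'X _ hgm
      have h1 : g (m+1) ∉ X := fun hc => hind _ hxX _ hc hGadj
      have h2 : g (m+1) ∈ X ∪ Y := hcover.symm ▸ Set.mem_univ _
      exact h2.resolve_left h1
  have hMAdj : ∀ n, f' (g n) ∈ M.verts → M.Adj (f' (g n)) (g (n+1)) :=
    fun n hx => hgsucc n ▸ hpadj hx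
  have hgMem : ∀ n, f' (g n) ∈ M.verts → g (n+1) ∈ M.verts :=
    fun n hx => M.edge_vert (hMAdj n hx).symm
  have hne : ∀ j, ∀ i < j, (∀ k < j, f' (g k) ∈ M.verts) → g i ≠ g j := by
    intro j
    induction j using Nat.strong_induction_on with
    | _ j IH =>
      intro i hij hyp heq
      match j, hij with
      | (m+1), hij =>
        have hgj : g (m+1) ∈ M.verts := hgMem m (hyp m (Nat.lt_succ_self m))
        match i, hij with
        | 0, _ => exact hy0 (hg0 ▸ heq ▸ hgj)
        | (i'+1), hij =>
          have hi'm : i' < m := by omega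
          have hxi' : f' (g i') ∈ M.verts := hyp i' (by omega)
          have hxm : f' (g m) ∈ M.verts := hyp m (Nat.lt_succ_self m)
          have h1 : M.Adj (g (m+1)) (f' (g i')) := (heq ▸ (hMAdj i' hxi')).symm
          have h2 : M.Adj (g (m+1)) (f' (g m)) := (hMAdj m hxm).symm
          have hff : f' (g i') = f' (g m) := by
            obtain ⟨w, _, huniq⟩ := hM hgj
            rw [huniq _ h1, huniq _ h2]
          have hgi'Y : g i' ∈ Y := hY i' (fun k hk => hyp k (by omega))
          have hgmY : g m ∈ Y := hY m (fun k hk => hyp k (by omega))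
          have : g i' = g m := hf'inj _ hgi'Y _ hgmY hff
          exact IH m (Nat.lt_succ_self m) i' hi'm (fun k hk => hyp k (by omega)) this
  have hterm : ∃ n, f' (g n) ∉ M.verts := by
    by_contra hc
    push_neg at hc
    have hginj : Function.Injective g := by
      intro a b hab
      rcases lt_trichotomy a b with h | h | h
      · exact absurd hab (hne b a h (fun k _ => hc k))
      · exact h
      · exact absurd hab.symm (hne a b h (fun k _ => hc k))
    obtain ⟨a, b, hab, habeq⟩ := Finite.exists_ne_map_eq_of_infinite g
    exact hab (hginj habeq)
  obtain ⟨n, hn, hmin⟩ : ∃ n, f' (g n) ∉ M.verts ∧ ∀ k < n, f' (g k) ∈ M.verts :=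
    ⟨Nat.find hterm, Nat.find_spec hterm, fun k hk => not_not.mp (Nat.find_min hterm hk)⟩
  have hgYk : ∀ k ≤ n, g k ∈ Y := fun k hk =>
    hY k (fun j hj => hmin j (lt_of_lt_of_le hj hk))
  set A : Set V := g '' Set.Iic n with hA
  set B : Set V := (fun k => f' (g k)) '' Set.Iic n with hB
  have hAY : A ⊆ Y := by rintro v ⟨k, hk, rfl⟩; exact hgYk k hk
  have hBX : B ⊆ X := by rintro v ⟨k, hk, rfl⟩; exact hf'X _ (hgYk k hk)
  have hdisjAB : Disjoint A B := (hdisj.symm).mono hAY hBX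
  have hinjOn : Set.InjOn f' A := fun a ha b hb hab => hf'inj a (hAY ha) b (hAY hb) hab
  have hBeq : f' '' A = B := by rw [hA, hB, Set.image_image]
  set e : A ≃ B := (Equiv.Set.imageOfInjOn f' A hinjOn).trans (Equiv.setCongr hBeq) with he
  have hadjE : ∀ v : A, G.Adj ↑v ↑(e v) := by
    intro v
    have hcoe : (↑(e v) : V) = f' ↑v := rfl
    rw [hcoe]
    exact hf'adj _ (hAY v.2)
  obtain ⟨M₁, hM₁verts, hM₁⟩ :=
    Subgraph.IsMatching.exists_of_disjoint_sets_of_equiv hdisjAB e hadjE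
  have hclosed : ∀ v ∈ A ∪ B, ∀ w, M.Adj v w → w ∈ A ∪ B := by
    rintro v (⟨k, hk, rfl⟩ | ⟨k, hk, rfl⟩) w hw
    · match k, hk with
      | 0, _ => exact absurd (hg0 ▸ M.edge_vert hw) hy0
      | (j+1), hk =>
        have hj : j < n := lt_of_lt_of_le (Nat.lt_succ_self j) hk
        have hadj := hMAdj j (hmin j hj)
        have hweq : w = f' (g j) := by
          obtain ⟨u, _, huniq⟩ := hM (M.edge_vert hw)
          rw [huniq w hw, huniq _ hadj.symm]
        exact Or.inr ⟨j, le_of_lt hj, hweq.symm⟩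
    · rcases eq_or_lt_of_le (Set.mem_Iic.mp hk) with rfl | hk'
      · exact absurd (M.edge_vert hw) hn
      · have hadj := hMAdj k (hmin k hk')
        have hweq : w = g (k+1) := by
          obtain ⟨u, _, huniq⟩ := hM (M.edge_vert hw)
          rw [huniq w hw, huniq _ hadj]
        exact Or.inl ⟨k+1, hk', hweq.symm⟩
  set M₂ := M.deleteVerts (A ∪ B) with hM₂def
  have hM₂verts : M₂.verts = M.verts \ (A ∪ B) := by
    rw [hM₂def]; simp [Subgraph.deleteVerts_verts]
  have hM₂ : M₂.IsMatching := by
    intro v hv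
    rw [hM₂verts] at hv
    obtain ⟨w, hw, huniq⟩ := hM hv.1
    have hwv : w ∈ M.verts := M.edge_vert hw.symm
    have hwnot : w ∉ A ∪ B := fun hc => hv.2 (hclosed w hc v hw.symm)
    refine ⟨w, ?_, ?_⟩
    · rw [hM₂def]
      exact (Subgraph.deleteVerts_adj).mpr ⟨hv.1, hv.2, hwv, hwnot, hw⟩
    · intro y hy
      rw [hM₂def, Subgraph.deleteVerts_adj] at hy
      exact huniq y hy.2.2.2.2
  have hsupp : Disjoint M₂.support M₁.support := by
    have h1 : M₂.support ⊆ M.verts \ (A ∪ B) :=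
      (Subgraph.support_subset_verts _).trans (le_of_eq hM₂verts)
    have h2 : M₁.support ⊆ A ∪ B :=
      (Subgraph.support_subset_verts _).trans (le_of_eq hM₁verts)
    exact Set.disjoint_of_subset h1 h2 Set.disjoint_sdiff_left
  have hM' : (M₂ ⊔ M₁).IsMatching := hM₂.sup hM₁ hsupp
  have hverts : (M₂ ⊔ M₁).verts = (M.verts \ (A ∪ B)) ∪ (A ∪ B) := by
    rw [Subgraph.verts_sup, hM₂verts, hM₁verts]
  have hMsub : M.verts ⊂ (M₂ ⊔ M₁).verts := by
    constructor
    · intro v hv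
      rw [hverts]
      by_cases h : v ∈ A ∪ B
      · exact Or.inr h
      · exact Or.inl ⟨hv, h⟩
    · intro hc
      have hy0A : y0 ∈ A := ⟨0, by simp, hg0⟩
      have : y0 ∈ (M₂ ⊔ M₁).verts := hverts ▸ Or.inr (Or.inl hy0A)
      exact hy0 (hc this)
  have hlt : M.verts.ncard < (M₂ ⊔ M₁).verts.ncard :=
    Set.ncard_lt_ncard hMsub (Set.toFinite _)
  have hle := hmax (M₂ ⊔ M₁) hM'
  have h1 := matching_verts_ncard hM
  have h2 := matching_verts_ncard hM'
  omega
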